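/- Let (E, ℛ, τ) satisfy conditions (i), (ii), (iii). Let e ∈ E×, let 𝒮 ⊆ ℛ(e) be nonempty finite, and let R̃ ∈ ℛ(e) ∖ 𝒮. Then R(𝒮,R̃) is contained in E(E,ℛ) ∖ {0} and is a finite cover of e(𝒮) in the semilattice with zero E(E,ℛ) (whose multiplication and partial order are inherited from ℤ[E×]); in particular e(𝒮) = ⋁_{f' ∈ R(𝒮,R̃)} f' in ℤ[E×]. -/

import Mathlib

set_option linter.unusedSectionVars false

/-- A *semilattice with zero*: a commutative idempotent semigroup with an
absorbing element `0`. -/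
class SemilatticeWithZero (E : Type) extends CommSemigroup E, Zero E where
  mul_idem : ∀ e : E, e * e = e
  zero_mul : ∀ e : E, 0 * e = 0

namespace IndRes

variable {E : Type} [SemilatticeWithZero E]

/-- `single e c`, viewed in the semigroup algebra `ℤ[E]`. -/
noncomputable def sgl (e : E) (c : ℤ) : MonoidAlgebra ℤ E := MonoidAlgebra.ofCoeff (Finsupp.single e c)

/-- Truncation map deleting the coefficient at `0`. -/
noncomputable def T (x : MonoidAlgebra ℤ E) : MonoidAlgebra ℤ E := x - sgl 0 (x.coeff 0)

lemma sgl_apply_self (e : E) (c : ℤ) : (sgl e c).coeff e = c := Finsupp.single_eq_same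

lemma sgl_apply_ne (e d : E) (c : ℤ) (h : e ≠ d) : (sgl e c).coeff d = 0 := by
  simp [sgl, Finsupp.single_apply, h]

lemma sgl_add (e : E) (c d : ℤ) : sgl e (c + d) = sgl e c + sgl e d := congrArg MonoidAlgebra.ofCoeff (Finsupp.single_add e c d)

lemma sgl_sub (e : E) (c d : ℤ) : sgl e (c - d) = sgl e c - sgl e d := congrArg MonoidAlgebra.ofCoeff (Finsupp.single_sub e c d)

lemma T_apply_zero (x : MonoidAlgebra ℤ E) : (T x).coeff 0 = 0 := by
  show ((x - sgl 0 (x.coeff 0) : MonoidAlgebra ℤ E)).coeff 0 = 0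
  rw [MonoidAlgebra.coeff_sub, Finsupp.sub_apply, sgl_apply_self, sub_self]

/-- `ℤ[E^×]`, realized as the additive subgroup of the semigroup algebra
`ℤ[E]` consisting of the elements whose coefficient at `0` vanishes; it is the free
`ℤ`-module with basis `E^× = E \ {0}`. -/
noncomputable def ZS (E : Type) [SemilatticeWithZero E] : AddSubgroup (MonoidAlgebra ℤ E) where
  carrier := {x | x.coeff 0 = 0}
  zero_mem' := rfl
  add_mem' := by
    intro a b ha hb
    simp only [Set.mem_setOf_eq] at *
    rw [MonoidAlgebra.coeff_add, Finsupp.add_apply, ha, hb, add_zero]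
  neg_mem' := by
    intro a ha
    simp only [Set.mem_setOf_eq] at *
    rw [MonoidAlgebra.coeff_neg, Finsupp.neg_apply, ha, neg_zero]

/-- The integral semigroup ring `ℤ[E^×]`. -/
abbrev ZE (E : Type) [SemilatticeWithZero E] : Type := ↥(ZS E)

lemma mem_ZS {x : MonoidAlgebra ℤ E} : x ∈ ZS E ↔ x.coeff 0 = 0 := Iff.rfl

lemma T_eq_self {x : MonoidAlgebra ℤ E} (h : x.coeff 0 = 0) : T x = x := by
  simp [T, h, sgl]

lemma T_add (a b : MonoidAlgebra ℤ E) : T (a + b) = T a + T b := by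
  unfold T
  rw [show ((a + b).coeff 0) = a.coeff 0 + b.coeff 0 from Finsupp.add_apply a.coeff b.coeff 0, sgl_add]
  abel

lemma T_sub_sgl (x : MonoidAlgebra ℤ E) (m : ℤ) : T (x - sgl 0 m) = T x := by
  unfold T
  have h : ((x - sgl 0 m : MonoidAlgebra ℤ E)).coeff 0 = x.coeff 0 - m := by
    rw [MonoidAlgebra.coeff_sub, Finsupp.sub_apply, sgl_apply_self]
  rw [h, sgl_sub]
  abel

lemma single_zero_mul (c : ℤ) (b : MonoidAlgebra ℤ E) :
    (sgl 0 c) * b = sgl 0 (((sgl 0 c * b : MonoidAlgebra ℤ E)).coeff 0) := by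
  classical
  ext d
  by_cases hd : d = 0
  · subst hd; rw [sgl_apply_self]
  · rw [sgl_apply_ne 0 d _ (Ne.symm hd)]
    by_contra h
    have hmem : d ∈ ((sgl (0:E) c) * b).coeff.support := Finsupp.mem_support_iff.mpr h
    have h2 := MonoidAlgebra.support_coeff_mul_subset (sgl (0:E) c) b hmem
    rw [Finset.mem_mul] at h2
    obtain ⟨a, ha, b', _, hab⟩ := h2
    have ha' : a = 0 := by
      have := Finsupp.support_single_subset (ha : a ∈ (Finsupp.single (0:E) c).support)
      simpa using this
    exact hd (by rw [← hab, ha', SemilatticeWithZero.zero_mul])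

lemma T_mul_left (a b : MonoidAlgebra ℤ E) : T (T a * b) = T (a * b) := by
  have h1 : T a * b = a * b - (sgl 0 (a.coeff 0)) * b := by rw [T, sub_mul]
  rw [h1, single_zero_mul, T_sub_sgl]

lemma T_mul_right (a b : MonoidAlgebra ℤ E) : T (a * T b) = T (a * b) := by
  rw [mul_comm a (T b), T_mul_left, mul_comm]

noncomputable instance : Mul (ZE E) :=
  ⟨fun x y => ⟨T (x.1 * y.1), T_apply_zero _⟩⟩

lemma ZE.val_mul (x y : ZE E) : (x * y).1 = T (x.1 * y.1) := rfl

noncomputable instance : NonUnitalCommRing (ZE E) :=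
  { (inferInstance : AddCommGroup (ZE E)) with
    mul := (· * ·)
    left_distrib := by
      intro x y z
      apply Subtype.ext
      show T (x.1 * (y.1 + z.1)) = T (x.1 * y.1) + T (x.1 * z.1)
      rw [mul_add, T_add]
    right_distrib := by
      intro x y z
      apply Subtype.ext
      show T ((x.1 + y.1) * z.1) = T (x.1 * z.1) + T (y.1 * z.1)
      rw [add_mul, T_add]
    zero_mul := by
      intro x
      apply Subtype.ext
      show T ((0 : MonoidAlgebra ℤ E) * x.1) = 0
      rw [zero_mul]
      simp [T, sgl]
    mul_zero := by
      intro x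
      apply Subtype.ext
      show T (x.1 * (0 : MonoidAlgebra ℤ E)) = 0
      rw [mul_zero]
      simp [T, sgl]
    mul_assoc := by
      intro x y z
      apply Subtype.ext
      show T (T (x.1 * y.1) * z.1) = T (x.1 * T (y.1 * z.1))
      rw [T_mul_left, T_mul_right, mul_assoc]
    mul_comm := by
      intro x y
      apply Subtype.ext
      show T (x.1 * y.1) = T (y.1 * x.1)
      rw [mul_comm] }

/-- The canonical image of `e ∈ E` in `ℤ[E^×]`: the basis element `e` if `e ≠ 0`,
and `0` if `e = 0`. -/
noncomputable def elt (e : E) : ZE E := ⟨T (sgl e 1), T_apply_zero _⟩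

/-- Product of a (nonempty) finite family in a commutative non-unital ring, computed inside
the unitization.  For a nonempty index set this is the iterated product. -/
noncomputable def nprod {ι A : Type} [NonUnitalCommRing A] (s : Finset ι) (f : ι → A) : A :=
  (∏ j ∈ s, (Unitization.inr (f j) : Unitization ℤ A)).snd

/-- The join `⋁_{j ∈ J} x_j = ∑_{∅ ≠ J' ⊆ J} (-1)^{|J'|+1} ∏_{j ∈ J'} x_j`
of a finite family of idempotents of a commutative non-unital ring. -/
noncomputable def rjoin {ι A : Type} [NonUnitalCommRing A] (s : Finset ι) (f : ι → A) : A :=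
  ∑ t ∈ s.powerset.filter (fun t => t.Nonempty), ((-1 : ℤ) ^ (t.card + 1)) • nprod t f

/-- The join `⋁_{j ∈ J} e_j ∈ ℤ[E^×]` of a finite family of elements of `E`:
`∑_{∅ ≠ J' ⊆ J} (-1)^{|J'|+1} ∏_{j ∈ J'} e_j`, where a product whose value in `E`
is `0` contributes `0`. -/
noncomputable def join {ι : Type} (s : Finset ι) (e : ι → E) : ZE E :=
  rjoin s (fun j => elt (e j))

/-- Iterated product of a nonempty list in a semigroup with zero (the value on the
empty list is the junk value `0`). -/
def listProd : List E → E
  | [] => 0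
  | [a] => a
  | a :: b :: l => a * listProd (b :: l)

/-- The product `∏_{j ∈ s} f j ∈ E` of a (nonempty) finite family. -/
noncomputable def eprod {ι : Type} (s : Finset ι) (f : ι → E) : E :=
  listProd (s.toList.map f)

/-- The support `E(x)` of `x ∈ ℤ[E^×]`: the finite set of elements of `E^×` appearing
with a nonzero coefficient in the reduced form of `x`. -/
noncomputable def supp (x : ZE E) : Finset E := x.1.coeff.support

section Action

variable {Γ : Type} [Group Γ] [MulAction Γ E]

/-- The induced action of `g ∈ Γ` on `ℤ[E^×]`: the `ℤ`-linear map sending a basis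
element `e ∈ E^×` to `g • e`.  (When the action fixes `0` — which is the case for an
action by semigroup automorphisms fixing `0` — the truncation `T` is a no-op, and this
is the automorphism of `ℤ[E^×]` induced by `τ_g`.) -/
noncomputable def act (g : Γ) (x : ZE E) : ZE E :=
  ⟨T (MonoidAlgebra.ofCoeff (Finsupp.mapDomain (fun e : E => g • e) x.1.coeff)), T_apply_zero _⟩

end Action



attribute [local instance] Classical.propDecidable

variable {E : Type} [SemilatticeWithZero E]

/-- A Γ-semilattice structure: the group acts by semigroup automorphisms fixing `0`. -/
def IsGammaSL (Γ E : Type) [Group Γ] [SemilatticeWithZero E] [MulAction Γ E] : Prop :=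
  (∀ (g : Γ) (x y : E), g • (x * y) = (g • x) * (g • y)) ∧ (∀ g : Γ, g • (0 : E) = 0)

/-- The set `E_φ`. -/
def Ephi {D : Type} [NonUnitalCommRing D] (φ : ZE E →ₙ+* D) : Set (ZE E) :=
  { x | ∃ (e : E) (J : Finset E), e ≠ 0 ∧ (∀ f ∈ J, f ≠ 0 ∧ f * e = f ∧ f ≠ e) ∧
      x = elt e - join J (fun f => f) ∧
      φ (elt e) = rjoin J (fun f => φ (elt f)) }

/-- `R` is a finite cover for `e ∈ E^×`. -/
def IsCover (e : E) (R : Finset E) : Prop :=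
  (∀ f ∈ R, f ≠ 0 ∧ f * e = f) ∧
  ∀ f' : E, f' ≠ 0 → f' * e = f' → ∃ f ∈ R, f' * f ≠ 0

/-- `ℛ` is a collection of finite covers for `E`. -/
def CovSystem (ℛ : E → Set (Finset E)) : Prop :=
  ∀ e : E, e ≠ 0 → ∀ R ∈ ℛ e, IsCover e R

/-- Condition (i). -/
def CondI (ℛ : E → Set (Finset E)) : Prop :=
  ∀ d e : E, d ≠ 0 → e ≠ 0 → d * e ≠ 0 → ∀ R ∈ ℛ e,
    d * e ∈ (R.image (fun f => d * f)).erase 0 ∨ (R.image (fun f => d * f)).erase 0 ∈ ℛ (d * e)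

/-- Condition (ii). -/
def CondII (ℛ : E → Set (Finset E)) : Prop :=
  ∀ e : E, e ≠ 0 → ∀ r : ℕ, 0 < r → ∀ Rs : Fin r → Finset E,
    Function.Injective Rs → (∀ i, Rs i ∈ ℛ e) → ∀ ε : Fin r → E,
    (∀ i, ε i ∈ supp (join (Rs i) (fun f => f))) → ∀ j : Fin r,
      (if r = 1 then e else eprod (Finset.univ.erase j) ε) ≠ 0 →
      eprod Finset.univ ε * (if r = 1 then e else eprod (Finset.univ.erase j) ε)
          = eprod Finset.univ ε ∧
      eprod Finset.univ ε ≠ (if r = 1 then e else eprod (Finset.univ.erase j) ε)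

/-- Condition (iii). -/
def CondIII (Γ : Type) [Group Γ] [MulAction Γ E] (ℛ : E → Set (Finset E)) : Prop :=
  ∀ (g : Γ) (e : E), e ≠ 0 →
    (fun R : Finset E => R.image (fun f => g • f)) '' (ℛ e) = ℛ (g • e)

/-- `e(𝒮) = ∏_{R ∈ 𝒮} (e - ⋁R) ∈ ℤ[E^×]`. -/
noncomputable def eS (e : E) (S : Finset (Finset E)) : ZE E :=
  nprod S (fun R => elt e - join R (fun f => f))

/-- `E(E,ℛ) = {e(𝒮) : e ∈ E^×, 𝒮 ⊆ ℛ(e) nonempty finite} ∪ {0} ⊆ ℤ[E^×]`. -/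
def EER (ℛ : E → Set (Finset E)) : Set (ZE E) :=
  {x | ∃ (e : E) (S : Finset (Finset E)), e ≠ 0 ∧ S.Nonempty ∧ ↑S ⊆ ℛ e ∧ x = eS e S} ∪ {0}

/-- `R(𝒮,R̃) = {e(𝒮 ∪ {R̃})} ∪ {f ⬝ e(𝒮) : f ∈ R̃, f ⬝ e(𝒮) ≠ 0}`. -/
noncomputable def RSR (e : E) (S : Finset (Finset E)) (Rt : Finset E) : Finset (ZE E) :=
  insert (eS e (insert Rt S)) ((Rt.image (fun f => elt f * eS e S)).erase 0)

/-- The collection of finite covers `ℛ(E,ℛ)` on `E(E,ℛ)`, assigning to an element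
`x = e(𝒮)` of `E(E,ℛ)^×` the covers `R(𝒮,R̃)`, `R̃ ∈ ℛ(e) ∖ 𝒮` (over all ways of
presenting `x` in the form `e(𝒮)`). -/
def RER (ℛ : E → Set (Finset E)) (x : ZE E) : Set (Finset (ZE E)) :=
  {C | ∃ (e : E) (S : Finset (Finset E)) (Rt : Finset E),
        e ≠ 0 ∧ S.Nonempty ∧ ↑S ⊆ ℛ e ∧ Rt ∈ ℛ e ∧ Rt ∉ S ∧ x = eS e S ∧ C = RSR e S Rt}

/-- The `ℤ`-linear map `ℤ[E₁^×] → ℤ[E₂^×]` induced by a map `θ` from `E₁` to `ℤ[E₂^×]`,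
sending a basis element `e' ∈ E₁^×` to `θ e'`. -/
noncomputable def indMap {E₁ E₂ : Type} [SemilatticeWithZero E₁] [SemilatticeWithZero E₂]
    (θ : E₁ → ZE E₂) : ZE E₁ →ₗ[ℤ] ZE E₂ :=
  (Finsupp.linearCombination ℤ θ).comp ((MonoidAlgebra.coeffAddEquiv.toAddMonoidHom.comp (ZS E₁).subtype).toIntLinearMap)

/-- `(E₁, ℛ₁, θ)` is a realization of the construction `(E(E,ℛ), ℛ(E,ℛ))`:
`θ` identifies the abstract Γ-semilattice `E₁` with `E(E,ℛ) ⊆ ℤ[E^×]` (equivariantly,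
multiplicatively and preserving `0`), and `ℛ₁` corresponds to `ℛ(E,ℛ)` under this
identification. -/
def Realizes {Γ E E₁ : Type} [Group Γ] [SemilatticeWithZero E] [MulAction Γ E]
    [SemilatticeWithZero E₁] [MulAction Γ E₁]
    (ℛ : E → Set (Finset E)) (ℛ₁ : E₁ → Set (Finset E₁)) (θ : E₁ → ZE E) : Prop :=
  Function.Injective θ ∧ Set.range θ = EER ℛ ∧ θ 0 = 0 ∧
  (∀ x y : E₁, θ (x * y) = θ x * θ y) ∧
  (∀ (g : Γ) (x : E₁), θ (g • x) = act g (θ x)) ∧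
  (∀ e' : E₁, e' ≠ 0 → ∀ C : Finset E₁, C ∈ ℛ₁ e' ↔ C.image θ ∈ RER ℛ (θ e'))

end IndRes
namespace IndRes

section GenHelpers

attribute [local instance] Classical.propDecidable

variable {M : Type} [CommMonoid M] {κ ι : Type}

lemma prod_insert_idem [DecidableEq κ] {g : κ → M} {a : κ} {s : Finset κ} (h : g a * g a = g a) :
    (∏ x ∈ insert a s, g x) = g a * ∏ x ∈ s, g x := by
  by_cases ha : a ∈ s
  · rw [Finset.insert_eq_self.mpr ha, ← Finset.mul_prod_erase s g ha, ← mul_assoc, h]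
  · exact Finset.prod_insert ha

lemma prod_image_idem [DecidableEq κ] {g : κ → M} {h : ι → κ} {t : Finset ι}
    (hg : ∀ i ∈ t, g (h i) * g (h i) = g (h i)) :
    (∏ x ∈ t.image h, g x) = ∏ i ∈ t, g (h i) := by
  induction t using Finset.induction_on with
  | empty => simp
  | insert a s ha ih =>
    rw [Finset.image_insert, prod_insert_idem (hg a (Finset.mem_insert_self a s)),
      Finset.prod_insert ha, ih (fun i hi => hg i (Finset.mem_insert_of_mem hi))]

lemma prod_idem {g : κ → M} {s : Finset κ} (h : ∀ i ∈ s, g i * g i = g i) :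
    (∏ i ∈ s, g i) * (∏ i ∈ s, g i) = ∏ i ∈ s, g i := by
  induction s using Finset.induction_on with
  | empty => simp
  | insert a s ha ih =>
    rw [Finset.prod_insert ha, mul_mul_mul_comm, h a (Finset.mem_insert_self a s),
      ih (fun i hi => h i (Finset.mem_insert_of_mem hi))]

lemma idem_mul_prod_congr {p : M} (hp : p * p = p) {v w : κ → M} {s : Finset κ}
    (h : ∀ i ∈ s, p * v i = p * w i) :
    p * ∏ i ∈ s, v i = p * ∏ i ∈ s, w i := by
  induction s using Finset.induction_on with
  | empty => rfl
  | insert a s ha ih =>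
    have key : ∀ x y : M, p * (x * y) = (p * x) * (p * y) := by
      intro x y
      calc p * (x * y) = (p * p) * (x * y) := by rw [hp]
        _ = (p * x) * (p * y) := by rw [mul_mul_mul_comm]
    rw [Finset.prod_insert ha, Finset.prod_insert ha, key, key,
      h a (Finset.mem_insert_self a s), ih (fun i hi => h i (Finset.mem_insert_of_mem hi))]

lemma idem_mul_prod {p : M} (hp : p * p = p) {v : κ → M} {s : Finset κ} (hs : s.Nonempty) :
    ∏ i ∈ s, (p * v i) = p * ∏ i ∈ s, v i := by
  induction hs using Finset.Nonempty.cons_induction with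
  | singleton a => simp
  | cons a s ha hs ih =>
    rw [Finset.prod_cons, Finset.prod_cons, ih, ← mul_assoc, ← mul_assoc,
      mul_right_comm p (v a) p, hp]

end GenHelpers

section RingHelpers

variable {R : Type} [CommRing R] {κ : Type}

lemma one_sub_idem {p : R} (hp : p * p = p) : (1 - p) * (1 - p) = 1 - p := by
  linear_combination hp

lemma prod_q_form {q : R} (hq : q * q = q) (v : κ → R) (s : Finset κ) :
    ∏ i ∈ s, ((1 - q) + q * v i) = (1 - q) + q * ∏ i ∈ s, v i := by
  classical
  induction s using Finset.induction_on with
  | empty => simp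
  | insert a s ha ih =>
    rw [Finset.prod_insert ha, Finset.prod_insert ha, ih]
    linear_combination ((1 - v a) * (1 - ∏ i ∈ s, v i)) * hq

lemma mul_prod_one_sub_eq_self {z : R} {v : κ → R} {s : Finset κ}
    (h : ∀ i ∈ s, z * v i = 0) :
    z * ∏ i ∈ s, (1 - v i) = z := by
  classical
  induction s using Finset.induction_on with
  | empty => simp
  | insert a s ha ih =>
    rw [Finset.prod_insert ha, ← mul_assoc]
    have h1 : z * (1 - v a) = z := by
      have := h a (Finset.mem_insert_self a s)
      linear_combination -this
    rw [h1, ih (fun i hi => h i (Finset.mem_insert_of_mem hi))]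

end RingHelpers

section SLHelpers

attribute [local instance] Classical.propDecidable

variable {E : Type} [SemilatticeWithZero E]

lemma sl_idem (e : E) : e * e = e := SemilatticeWithZero.mul_idem e

lemma sl_zero_mul (e : E) : 0 * e = 0 := SemilatticeWithZero.zero_mul e

lemma sl_mul_absorb (f g : E) : (f * g) * f = f * g := by
  rw [mul_comm f g, mul_assoc, sl_idem]

/-- `u` is the canonical embedding of `ℤ[E^×]` into its unitization. -/
noncomputable def u (x : ZE E) : Unitization ℤ (ZE E) := Unitization.inr x

lemma u_inj : Function.Injective (u : ZE E → Unitization ℤ (ZE E)) :=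
  Unitization.inr_injective

lemma u_mul (x y : ZE E) : u (x * y) = u x * u y := Unitization.inr_mul ℤ x y

lemma u_zero : u (0 : ZE E) = 0 := Unitization.inr_zero ℤ

/-- `u` as an additive monoid hom. -/
noncomputable def uh : ZE E →+ Unitization ℤ (ZE E) where
  toFun := u
  map_zero' := u_zero
  map_add' := fun x y => Unitization.inr_add ℤ x y

lemma u_sub (x y : ZE E) : u (x - y) = u x - u y := map_sub (uh (E := E)) x y

lemma u_zsmul (n : ℤ) (x : ZE E) : u (n • x) = n • u x := Unitization.inr_smul ℤ n x

lemma u_snd (x : ZE E) : (u x).snd = x := rfl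

lemma u_fst (x : ZE E) : (u x).fst = 0 := rfl

-- `elt` basics

lemma elt_val {e : E} (he : e ≠ 0) : (elt e).1 = sgl e 1 := by
  apply T_eq_self
  exact sgl_apply_ne e 0 1 he

lemma elt_zero : elt (0 : E) = 0 := by
  apply Subtype.ext
  show T (sgl 0 1) = 0
  unfold T
  rw [sgl_apply_self, sub_self]

lemma sgl_mul (a b : E) (c d : ℤ) :
    (sgl a c : MonoidAlgebra ℤ E) * sgl b d = sgl (a * b) (c * d) :=
  MonoidAlgebra.single_mul_single ..

lemma elt_mul (a b : E) : elt (a * b) = elt a * elt b := by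
  by_cases ha : a = 0
  · subst ha
    rw [sl_zero_mul, elt_zero, zero_mul]
  by_cases hb : b = 0
  · subst hb
    rw [mul_comm, sl_zero_mul, elt_zero, mul_zero]
  apply Subtype.ext
  show (elt (a * b)).1 = T ((elt a).1 * (elt b).1)
  rw [elt_val ha, elt_val hb, sgl_mul, one_mul]
  rfl

lemma elt_idem (e : E) : elt e * elt e = elt e := by
  rw [← elt_mul, sl_idem]

lemma u_elt_idem (e : E) : u (elt e) * u (elt e) = u (elt e) := by
  rw [← u_mul, elt_idem]

-- `nprod` and `rjoin` via the unitization

lemma u_nprod {ι : Type} {s : Finset ι} (hs : s.Nonempty) (f : ι → ZE E) :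
    u (nprod s f) = ∏ j ∈ s, u (f j) := by
  have hfst : (∏ j ∈ s, u (f j)).fst = 0 := by
    have : (∏ j ∈ s, u (f j)).fst = ∏ j ∈ s, (u (f j)).fst :=
      map_prod (Unitization.fstHom ℤ (ZE E)).toMonoidHom _ s
    rw [this]
    simp only [u_fst]
    rw [Finset.prod_const, zero_pow (Finset.card_ne_zero.mpr hs)]
  apply Unitization.ext
  · rw [u_fst, hfst]
  · rfl

lemma nprod_singleton {ι : Type} (a : ι) (f : ι → ZE E) : nprod {a} f = f a := by
  unfold nprod
  rw [Finset.prod_singleton]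
  rfl

lemma nprod_cons {ι : Type} {a : ι} {s : Finset ι} (ha : a ∉ s) (hs : s.Nonempty)
    (f : ι → ZE E) : nprod (Finset.cons a s ha) f = f a * nprod s f := by
  apply u_inj
  rw [u_nprod ⟨a, Finset.mem_cons_self a s⟩, u_mul, u_nprod hs, Finset.prod_cons]

lemma u_rjoin {ι : Type} (s : Finset ι) (f : ι → ZE E) :
    u (rjoin s f) = 1 - ∏ j ∈ s, (1 - u (f j)) := by
  classical
  have hprod : ∏ j ∈ s, (1 - u (f j))
      = ∑ t ∈ s.powerset, ((-1 : ℤ) ^ t.card) • ∏ j ∈ t, u (f j) := by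
    have h1 : ∀ j ∈ s, (1 : Unitization ℤ (ZE E)) - u (f j) = -u (f j) + 1 := by
      intro j _; ring
    rw [Finset.prod_congr rfl h1]
    refine (Finset.prod_add (fun j => -u (f j)) (fun _ => (1 : Unitization ℤ (ZE E))) s).trans ?_
    refine Finset.sum_congr rfl fun t ht => ?_
    rw [Finset.prod_const_one, mul_one]
    have h2 : ∏ i ∈ t, -u (f i)
        = ((-1 : Unitization ℤ (ZE E)) ^ t.card) * ∏ j ∈ t, u (f j) := by
      rw [Finset.prod_congr rfl (fun i (_ : i ∈ t) => (neg_one_mul (u (f i))).symm),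
        Finset.prod_mul_distrib, Finset.prod_const]
    rw [h2, zsmul_eq_mul]
    push_cast
    rw [Int.cast_pow (R := Unitization ℤ (ZE E)), Int.cast_neg, Int.cast_one]
  have hsplit := Finset.sum_filter_add_sum_filter_not s.powerset (fun t => t.Nonempty)
      (fun t => ((-1 : ℤ) ^ t.card) • ∏ j ∈ t, u (f j))
  have hne : s.powerset.filter (fun t => ¬ t.Nonempty) = {∅} := by
    ext t
    simp only [Finset.mem_filter, Finset.mem_powerset, Finset.not_nonempty_iff_eq_empty,
      Finset.mem_singleton]
    constructor
    · rintro ⟨-, h⟩; exact h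
    · rintro rfl; exact ⟨Finset.empty_subset s, rfl⟩
  rw [hne] at hsplit
  have hempty : ∑ t ∈ ({∅} : Finset (Finset ι)),
      ((-1 : ℤ) ^ t.card) • ∏ j ∈ t, u (f j) = 1 := by simp
  rw [hempty] at hsplit
  have hjoin : u (rjoin s f) =
      ∑ t ∈ s.powerset.filter (fun t => t.Nonempty),
        ((-1 : ℤ) ^ (t.card + 1)) • ∏ j ∈ t, u (f j) := by
    show uh (rjoin s f) = _
    unfold rjoin
    rw [map_sum]
    refine Finset.sum_congr rfl fun t ht => ?_
    have htne : t.Nonempty := (Finset.mem_filter.mp ht).2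
    show u _ = _
    rw [u_zsmul, u_nprod htne]
  rw [hjoin, hprod, ← hsplit]
  have : ∀ t : Finset ι, ((-1 : ℤ) ^ (t.card + 1)) • (∏ j ∈ t, u (f j))
      = -(((-1 : ℤ) ^ t.card) • ∏ j ∈ t, u (f j)) := by
    intro t
    rw [pow_succ, mul_smul, neg_one_zsmul]
    exact smul_neg _ _
  rw [Finset.sum_congr rfl (fun t _ => this t), Finset.sum_neg_distrib]
  ring

lemma u_join (s : Finset E) :
    u (join s (fun f => f)) = 1 - ∏ g ∈ s, (1 - u (elt g)) :=
  u_rjoin s (fun g => elt g)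

lemma sub_one_mul_prod {e : E} {s : Finset E} (h : ∀ g ∈ s, g * e = g) :
    (u (elt e) - 1) * ∏ g ∈ s, (1 - u (elt g)) = u (elt e) - 1 := by
  classical
  induction s using Finset.induction_on with
  | empty => simp
  | insert a s ha ih =>
    rw [Finset.prod_insert ha, ← mul_assoc]
    have h1 : (u (elt e) - 1) * (1 - u (elt a)) = u (elt e) - 1 := by
      have hea : u (elt e) * u (elt a) = u (elt a) := by
        rw [← u_mul, ← elt_mul, mul_comm e a, h a (Finset.mem_insert_self a s)]
      linear_combination -hea
    rw [h1, ih (fun g hg => h g (Finset.mem_insert_of_mem hg))]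

lemma u_factor {e : E} {R : Finset E} (h : ∀ g ∈ R, g * e = g) :
    u (elt e - join R (fun f => f)) = u (elt e) * ∏ g ∈ R, (1 - u (elt g)) := by
  rw [u_sub, u_join]
  linear_combination -sub_one_mul_prod h

lemma u_eS {e : E} {S : Finset (Finset E)} (hS : S.Nonempty)
    (h : ∀ R ∈ S, ∀ g ∈ R, g * e = g) :
    u (eS e S) = u (elt e) * ∏ R ∈ S, ∏ g ∈ R, (1 - u (elt g)) := by
  show u (nprod S (fun R => elt e - join R (fun f => f))) = _
  rw [u_nprod hS]
  rw [Finset.prod_congr rfl (fun R hR => u_factor (h R hR))]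
  exact idem_mul_prod (u_elt_idem e) hS

lemma prod_image_elt [DecidableEq E] (φ : E → E) (R : Finset E) :
    ∏ h ∈ R.image φ, (1 - u (elt h)) = ∏ g ∈ R, (1 - u (elt (φ g))) :=
  prod_image_idem (fun g _ => one_sub_idem (R := Unitization ℤ (ZE E)) (u_elt_idem (φ g)))

lemma prod_erase_zero_elt [DecidableEq E] (R : Finset E) :
    ∏ h ∈ R.erase 0, (1 - u (elt h)) = ∏ h ∈ R, (1 - u (elt h)) :=
  Finset.prod_erase R (f := fun h => 1 - u (elt h)) (a := (0 : E))
    (by show (1 : Unitization ℤ (ZE E)) - u (elt (0 : E)) = 1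
        rw [elt_zero, u_zero, sub_zero])

lemma prod_image_inner [DecidableEq (Finset E)] (φ : Finset E → Finset E) (S : Finset (Finset E)) :
    ∏ R' ∈ S.image φ, ∏ h ∈ R', (1 - u (elt h))
      = ∏ R ∈ S, ∏ h ∈ φ R, (1 - u (elt h)) := by
  apply prod_image_idem (g := fun R' => ∏ h ∈ R', (1 - u (elt h))) (h := φ) (t := S)
  intro R _
  exact prod_idem fun h _ => one_sub_idem (R := Unitization ℤ (ZE E)) (u_elt_idem h)

lemma prod_erase_zero_u [DecidableEq (ZE E)] (T : Finset (ZE E)) :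
    ∏ y ∈ T.erase 0, (1 - u y) = ∏ y ∈ T, (1 - u y) :=
  Finset.prod_erase T (f := fun y => 1 - u y) (a := (0 : ZE E))
    (by show (1 : Unitization ℤ (ZE E)) - u (0 : ZE E) = 1
        rw [u_zero, sub_zero])

lemma prod_image_u [DecidableEq (ZE E)] {ι : Type} (φ : ι → ZE E) (T : Finset ι)
    (hidem : ∀ i ∈ T, u (φ i) * u (φ i) = u (φ i)) :
    ∏ y ∈ T.image φ, (1 - u y) = ∏ i ∈ T, (1 - u (φ i)) := by
  apply prod_image_idem (g := fun y => 1 - u y) (h := φ) (t := T)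
  intro i hi
  exact one_sub_idem (R := Unitization ℤ (ZE E)) (hidem i hi)

lemma prod_insert_u [DecidableEq (ZE E)] {a : ZE E} {T : Finset (ZE E)} (hidem : u a * u a = u a) :
    ∏ y ∈ insert a T, (1 - u y) = (1 - u a) * ∏ y ∈ T, (1 - u y) :=
  prod_insert_idem (g := fun y => 1 - u y) (one_sub_idem (R := Unitization ℤ (ZE E)) hidem)

end SLHelpers

section Coeff

attribute [local instance] Classical.propDecidable

variable {E : Type} [SemilatticeWithZero E]

/-- `x` is supported on elements `≤ e`. -/
def Bnd (e : E) (x : ZE E) : Prop := ∀ d ∈ x.1.coeff.support, d * e = d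

lemma T_support_subset (z : MonoidAlgebra ℤ E) :
    (T z).coeff.support ⊆ insert 0 z.coeff.support := by
  intro d hd
  have hd2 : d ∈ ((z - sgl 0 (z.coeff 0) : MonoidAlgebra ℤ E)).coeff.support := hd
  have h2 := Finsupp.support_sub (f := z.coeff) (g := (sgl 0 (z.coeff 0)).coeff) hd2
  rcases Finset.mem_union.mp h2 with h | h
  · exact Finset.mem_insert_of_mem h
  · have := Finsupp.support_single_subset h
    rw [Finset.mem_singleton] at this
    rw [this]
    exact Finset.mem_insert_self 0 _

lemma T_apply_ne {z : MonoidAlgebra ℤ E} {d : E} (hd : d ≠ 0) : (T z).coeff d = z.coeff d := by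
  show ((z - sgl 0 (z.coeff 0) : MonoidAlgebra ℤ E)).coeff d = z.coeff d
  rw [MonoidAlgebra.coeff_sub, Finsupp.sub_apply, sgl_apply_ne 0 d _ (Ne.symm hd), sub_zero]

lemma bnd_mul {e : E} {x y : ZE E} (hx : Bnd e x) (hy : Bnd e y) : Bnd e (x * y) := by
  intro d hd
  rw [ZE.val_mul] at hd
  have hd' := T_support_subset _ hd
  rcases Finset.mem_insert.mp hd' with h | h
  · rw [h]; exact sl_zero_mul e
  · have h2 := MonoidAlgebra.support_coeff_mul_subset x.1 y.1 h
    rw [Finset.mem_mul] at h2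
    obtain ⟨a, ha, b, hb, hab⟩ := h2
    subst hab
    rw [mul_assoc, hy b hb]

lemma coeff_e_mul {e : E} (he : e ≠ 0) {x y : ZE E} (hx : Bnd e x) (hy : Bnd e y) :
    (x * y).1.coeff e = x.1.coeff e * y.1.coeff e := by
  rw [ZE.val_mul, T_apply_ne he, MonoidAlgebra.coeff_mul]
  simp only [Finsupp.sum]
  rw [Finset.sum_eq_single e]
  · rw [Finset.sum_eq_single e]
    · rw [if_pos (sl_idem e)]
    · intro b hb hbe
      rw [if_neg]
      intro h
      apply hbe
      have h1 : b * e = b := hy b hb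
      rw [← h1, mul_comm b e, h]
    · intro hne
      rw [Finsupp.notMem_support_iff.mp hne]
      simp
  · intro a ha hae
    apply Finset.sum_eq_zero
    intro b _
    rw [if_neg]
    intro h
    apply hae
    have h1 : a * e = a := hx a ha
    rw [← h1, ← h, ← mul_assoc, sl_idem]
  · intro hne
    rw [Finsupp.notMem_support_iff.mp hne]
    apply Finset.sum_eq_zero
    intro b _
    split <;> simp

lemma factor_bnd {e : E} {R : Finset E}
    (hsupp : ∀ ε ∈ (join R (fun f => f)).1.coeff.support, ε * e = ε) :
    Bnd e (elt e - join R (fun f => f)) := by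
  intro d hd
  have hd1 : d ∈ ((elt e).1.coeff - (join R (fun f => f)).1.coeff).support := hd
  have h2 := Finsupp.support_sub hd1
  rcases Finset.mem_union.mp h2 with h | h
  · by_cases he : e = 0
    · subst he
      rw [elt_zero] at h
      simp at h
    · rw [elt_val he] at h
      have := Finsupp.support_single_subset h
      rw [Finset.mem_singleton] at this
      rw [this]
      exact sl_idem e
  · exact hsupp d h

lemma factor_coeff {e : E} (he : e ≠ 0) {R : Finset E}
    (hsupp : ∀ ε ∈ (join R (fun f => f)).1.coeff.support, ε ≠ e) :
    (elt e - join R (fun f => f)).1.coeff e = 1 := by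
  have h1 : ((elt e - join R (fun f => f)) : ZE E).1
      = (elt e).1 - (join R (fun f => f)).1 := rfl
  rw [h1, MonoidAlgebra.coeff_sub, Finsupp.sub_apply, elt_val he, sgl_apply_self]
  have h2 : (join R (fun f => f)).1.coeff e = 0 := by
    by_contra h
    exact hsupp e (Finsupp.mem_support_iff.mpr h) rfl
  rw [h2, sub_zero]

/-- Extraction of the `r = 1` case of condition (ii). -/
lemma cond2_r1 {ℛ : E → Set (Finset E)} (h2 : CondII ℛ) {e : E} (he : e ≠ 0)
    {R : Finset E} (hR : R ∈ ℛ e) :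
    ∀ ε ∈ (join R (fun f => f)).1.coeff.support, ε * e = ε ∧ ε ≠ e := by
  intro ε hε
  have hinj : Function.Injective (fun _ : Fin 1 => R) := by
    intro i j _
    exact Subsingleton.elim i j
  have := h2 e he 1 Nat.one_pos (fun _ => R) hinj (fun _ => hR) (fun _ => ε)
    (fun _ => hε) 0 (by simpa using he)
  have heprod : eprod (Finset.univ : Finset (Fin 1)) (fun _ => ε) = ε := by
    unfold eprod
    rw [Finset.univ_unique, Finset.toList_singleton]
    rfl
  rw [heprod] at this
  simpa using this

lemma eS_props {ℛ : E → Set (Finset E)} (h2 : CondII ℛ) {e : E} (he : e ≠ 0)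
    {S : Finset (Finset E)} (hS : S.Nonempty) (hSR : ↑S ⊆ ℛ e) :
    (eS e S).1.coeff e = 1 ∧ Bnd e (eS e S) := by
  classical
  induction hS using Finset.Nonempty.cons_induction with
  | singleton R =>
    have hR : R ∈ ℛ e := hSR (by simp)
    have hsupp := cond2_r1 h2 he hR
    have heq : eS e {R} = elt e - join R (fun f => f) := nprod_singleton _ _
    rw [heq]
    exact ⟨factor_coeff he (fun ε hε => (hsupp ε hε).2),
      factor_bnd (fun ε hε => (hsupp ε hε).1)⟩
  | cons R S hRS hSne ih =>
    have hR : R ∈ ℛ e := hSR (by simp)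
    have hSR' : ↑S ⊆ ℛ e := by
      intro x hx
      exact hSR (by simp [hx])
    obtain ⟨ih1, ih2⟩ := ih hSR'
    have hsupp := cond2_r1 h2 he hR
    have hfb : Bnd e (elt e - join R (fun f => f)) :=
      factor_bnd (fun ε hε => (hsupp ε hε).1)
    have hfc : (elt e - join R (fun f => f)).1.coeff e = 1 :=
      factor_coeff he (fun ε hε => (hsupp ε hε).2)
    have heq : eS e (Finset.cons R S hRS)
        = (elt e - join R (fun f => f)) * eS e S := nprod_cons hRS hSne _
    rw [heq]
    constructor
    · rw [coeff_e_mul he hfb ih2, hfc, ih1, one_mul]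
    · exact bnd_mul hfb ih2

lemma eS_ne_zero {ℛ : E → Set (Finset E)} (h2 : CondII ℛ) {e : E} (he : e ≠ 0)
    {S : Finset (Finset E)} (hS : S.Nonempty) (hSR : ↑S ⊆ ℛ e) :
    eS e S ≠ 0 := by
  intro h
  have := (eS_props h2 he hS hSR).1
  rw [h] at this
  simp at this

end Coeff

end IndRes

open IndRes

set_option maxHeartbeats 1600000 in
theorem statement_10 {E Γ : Type} [SemilatticeWithZero E] [Group Γ] [MulAction Γ E]
    (hact : IsGammaSL Γ E) (ℛ : E → Set (Finset E))
    (hcov : CovSystem ℛ) (h1 : CondI ℛ) (h2 : CondII ℛ) (h3 : CondIII Γ ℛ) :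
    ∀ e : E, e ≠ 0 → ∀ S : Finset (Finset E), S.Nonempty → ↑S ⊆ ℛ e →
    ∀ Rt ∈ ℛ e, Rt ∉ S →
      (↑(RSR e S Rt) ⊆ EER ℛ \ {0}) ∧
      (∀ y ∈ RSR e S Rt, y * eS e S = y) ∧
      (∀ z ∈ EER ℛ, z ≠ 0 → z * eS e S = z → ∃ y ∈ RSR e S Rt, z * y ≠ 0) ∧
      eS e S = rjoin (RSR e S Rt) (fun y => y) := by
  classical
  intro e he S hS hSR Rt hRt hRtS
  -- cover facts
  have hcovS : ∀ R ∈ S, ∀ g ∈ R, g * e = g := fun R hR g hg =>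
    ((hcov e he R (hSR hR)).1 g hg).2
  have hcovRt : ∀ f ∈ Rt, f ≠ 0 ∧ f * e = f := fun f hf => (hcov e he Rt hRt).1 f hf
  have hS' : (insert Rt S : Finset (Finset E)).Nonempty := Finset.insert_nonempty _ _
  have hSR' : ↑(insert Rt S : Finset (Finset E)) ⊆ ℛ e := by
    rw [Finset.coe_insert]
    exact Set.insert_subset hRt hSR
  have hcovS' : ∀ R ∈ insert Rt S, ∀ g ∈ R, g * e = g := by
    intro R hR
    rcases Finset.mem_insert.mp hR with rfl | hR
    · exact fun g hg => (hcovRt g hg).2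
    · exact hcovS R hR
  set q : Unitization ℤ (ZE E) := u (eS e S) with hqdef
  have hq : q = u (elt e) * ∏ R ∈ S, ∏ g ∈ R, (1 - u (elt g)) := u_eS hS hcovS
  set c : Unitization ℤ (ZE E) := ∏ f ∈ Rt, (1 - u (elt f)) with hcdef
  have hqi : q * q = q := by
    rw [hq, mul_mul_mul_comm (G := Unitization ℤ (ZE E)), u_elt_idem,
      prod_idem (M := Unitization ℤ (ZE E)) (fun R _ => prod_idem (fun g _ => one_sub_idem (R := Unitization ℤ (ZE E)) (u_elt_idem g)))]
  have hci : c * c = c := prod_idem (fun f _ => one_sub_idem (R := Unitization ℤ (ZE E)) (u_elt_idem f))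
  have hqci : (q * c) * (q * c) = q * c := by linear_combination (c * c) * hqi + q * hci
  have hq' : u (eS e (insert Rt S)) = q * c := by
    rw [u_eS hS' hcovS', Finset.prod_insert hRtS, hq, hcdef]
    ring
  have hfq : ∀ f : E, u (elt f * eS e S) = u (elt f) * q := by
    intro f
    rw [u_mul, ← hqdef]
  have hfqi : ∀ f : E, (u (elt f) * q) * (u (elt f) * q) = u (elt f) * q := by
    intro f
    linear_combination (q * q) * (u_elt_idem f) + (u (elt f)) * hqi
  have hne' : eS e (insert Rt S) ≠ 0 := eS_ne_zero h2 he hS' hSR'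
  -- membership of the `f ⬝ e(S)` in `EER`
  have hEERf : ∀ x ∈ (Rt.image (fun f => elt f * eS e S)).erase 0, x ∈ EER ℛ := by
    intro x hx
    obtain ⟨hx0, hxim⟩ := Finset.mem_erase.mp hx
    obtain ⟨f, hf, rfl⟩ := Finset.mem_image.mp hxim
    have hf0 : f ≠ 0 := (hcovRt f hf).1
    have hfe : f * e = f := (hcovRt f hf).2
    have hfi := u_elt_idem f
    have hfee : u (elt f) * u (elt e) = u (elt f) := by
      rw [← u_mul, ← elt_mul, hfe]
    have hnotbad : ∀ R ∈ S, ¬ ∃ g ∈ R, f * g = f := by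
      rintro R hR ⟨g, hg, hfg⟩
      apply hx0
      apply u_inj
      rw [u_zero, hfq, hq, ← mul_assoc (G := Unitization ℤ (ZE E)), hfee, ← Finset.mul_prod_erase S _ hR, ← mul_assoc (G := Unitization ℤ (ZE E))]
      have hgd : u (elt f) * ∏ g' ∈ R, (1 - u (elt g')) = 0 := by
        rw [← Finset.mul_prod_erase R _ hg, ← mul_assoc]
        have h4 : u (elt f) * u (elt g) = u (elt f) := by rw [← u_mul, ← elt_mul, hfg]
        have h3 : u (elt f) * (1 - u (elt g)) = 0 := by linear_combination -h4
        rw [h3, zero_mul]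
      rw [hgd, zero_mul]
    have hgood : ∀ R ∈ S, (R.image (fun g => f * g)).erase 0 ∈ ℛ f := by
      intro R hR
      rcases h1 f e hf0 he (by rw [hfe]; exact hf0) R (hSR hR) with hbad | hgd
      · exfalso
        rw [hfe] at hbad
        obtain ⟨-, hmem⟩ := Finset.mem_erase.mp hbad
        obtain ⟨g, hg, hfg⟩ := Finset.mem_image.mp hmem
        exact hnotbad R hR ⟨g, hg, hfg⟩
      · rw [hfe] at hgd
        exact hgd
    set Sf : Finset (Finset E) :=
      S.image (fun R => (R.image (fun g => f * g)).erase 0) with hSfdef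
    have hSfne : Sf.Nonempty := hS.image _
    have hSfsub : ↑Sf ⊆ ℛ f := by
      intro R' hR'
      rw [Finset.mem_coe, hSfdef, Finset.mem_image] at hR'
      obtain ⟨R, hR, rfl⟩ := hR'
      exact hgood R hR
    have hSfcov : ∀ R' ∈ Sf, ∀ h ∈ R', h * f = h := by
      intro R' hR' h hh
      rw [hSfdef, Finset.mem_image] at hR'
      obtain ⟨R, hR, rfl⟩ := hR'
      obtain ⟨-, hmem⟩ := Finset.mem_erase.mp hh
      obtain ⟨g, hg, rfl⟩ := Finset.mem_image.mp hmem
      exact sl_mul_absorb f g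
    have hstep : ∀ R ∈ S, u (elt f) * ∏ g ∈ R, (1 - u (elt g))
        = u (elt f) * ∏ h ∈ (R.image (fun g => f * g)).erase 0, (1 - u (elt h)) := by
      intro R _
      have s1 : u (elt f) * ∏ g ∈ R, (1 - u (elt g))
          = u (elt f) * ∏ g ∈ R, (1 - u (elt (f * g))) := by
        refine idem_mul_prod_congr hfi fun g _ => ?_
        have h4 : u (elt (f * g)) = u (elt f) * u (elt g) := by rw [elt_mul, u_mul]
        linear_combination u (elt f) * h4 + u (elt g) * hfi
      have s2 : ∏ g ∈ R, (1 - u (elt (f * g)))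
          = ∏ h ∈ (R.image (fun g => f * g)).erase 0, (1 - u (elt h)) := by
        rw [prod_erase_zero_elt, prod_image_elt]
      rw [s1, s2]
    have houter : ∏ R' ∈ Sf, ∏ h ∈ R', (1 - u (elt h))
        = ∏ R ∈ S, ∏ h ∈ (R.image (fun g => f * g)).erase 0, (1 - u (elt h)) := by
      rw [hSfdef]
      exact prod_image_inner _ S
    have hkey : u (elt f * eS e S) = u (eS f Sf) := by
      rw [u_eS hSfne hSfcov, houter, hfq, hq, ← mul_assoc (G := Unitization ℤ (ZE E)), hfee]
      exact idem_mul_prod_congr hfi hstep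
    exact Or.inl ⟨f, Sf, hf0, hSfne, hSfsub, u_inj hkey⟩
  refine ⟨?_, ?_, ?_, ?_⟩
  · -- part 1
    intro x hx
    rw [Finset.mem_coe] at hx
    rcases Finset.mem_insert.mp hx with rfl | hx
    · exact ⟨Or.inl ⟨e, insert Rt S, he, hS', hSR', rfl⟩,
        fun h => hne' (by simpa using h)⟩
    · exact ⟨hEERf x hx, fun h => (Finset.mem_erase.mp hx).1 (by simpa using h)⟩
  · -- part 2
    intro y hy
    apply u_inj
    rw [u_mul, ← hqdef]
    rcases Finset.mem_insert.mp hy with rfl | hy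
    · rw [hq']
      linear_combination c * hqi
    · obtain ⟨hy0, hyim⟩ := Finset.mem_erase.mp hy
      obtain ⟨f, hf, rfl⟩ := Finset.mem_image.mp hyim
      rw [hfq]
      linear_combination u (elt f) * hqi
  · -- part 3
    intro z _ hz0 hze
    by_contra hcon
    push_neg at hcon
    have hzq : u z * q = u z := by rw [hqdef, ← u_mul, hze]
    have hz1 : u z * (q * c) = 0 := by
      rw [← hq', ← u_mul, hcon _ (Finset.mem_insert_self _ _), u_zero]
    have hzf : ∀ f ∈ Rt, u z * u (elt f) = 0 := by
      intro f hf
      have hz2 : u z * (u (elt f) * q) = 0 := by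
        by_cases h0 : elt f * eS e S = 0
        · rw [← hfq, h0, u_zero, mul_zero]
        · have hmem : elt f * eS e S ∈ RSR e S Rt :=
            Finset.mem_insert_of_mem (Finset.mem_erase.mpr ⟨h0, Finset.mem_image_of_mem _ hf⟩)
          rw [← hfq, ← u_mul, hcon _ hmem, u_zero]
      calc u z * u (elt f) = (u z * q) * u (elt f) := by rw [hzq]
        _ = u z * (u (elt f) * q) := by ring
        _ = 0 := hz2
    have hzc : u z * c = u z := by
      rw [hcdef]
      exact mul_prod_one_sub_eq_self (R := Unitization ℤ (ZE E)) fun f hf => hzf f hf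
    have hzz : u z = 0 := by
      calc u z = u z * c := hzc.symm
        _ = (u z * q) * c := by rw [hzq]
        _ = u z * (q * c) := by ring
        _ = 0 := hz1
    exact hz0 (u_inj (hzz.trans u_zero.symm))
  · -- part 4
    apply u_inj
    rw [u_rjoin, ← hqdef]
    have hprodRSR : ∏ y ∈ RSR e S Rt, (1 - u y)
        = (1 - q * c) * ∏ f ∈ Rt, (1 - u (elt f) * q) := by
      show ∏ y ∈ insert (eS e (insert Rt S))
          ((Rt.image (fun f => elt f * eS e S)).erase 0), (1 - u y) = _
      rw [prod_insert_u (by rw [hq']; exact hqci), prod_erase_zero_u,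
        prod_image_u _ _ (fun f _ => by rw [hfq]; exact hfqi f), hq']
      congr 1
      exact Finset.prod_congr rfl fun f _ => by rw [hfq]
    have hfprod : ∏ f ∈ Rt, (1 - u (elt f) * q) = (1 - q) + q * c := by
      calc ∏ f ∈ Rt, (1 - u (elt f) * q)
          = ∏ f ∈ Rt, ((1 - q) + q * (1 - u (elt f))) :=
            Finset.prod_congr rfl (fun f _ => by ring)
        _ = (1 - q) + q * ∏ f ∈ Rt, (1 - u (elt f)) := prod_q_form (R := Unitization ℤ (ZE E)) hqi _ Rt
        _ = (1 - q) + q * c := by rw [← hcdef]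
    rw [hprodRSR, hfprod]
    linear_combination (-(q * q)) * hci
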